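/- Let p, q be positive integers and α : (ZMod p) × (ZMod q) → ℝ with α(0,0) = 0 and α(m,n) > 0 for all (m,n) ≠ (0,0). Then Σ_{(m,n) ≠ (0,0)} (α(m,n) − α(-m,-n)) · log( α(m,n) / α(-m,-n) ) = 0 if and only if α(m,n) = α(-m,-n) for all (m,n) ∈ (ZMod p) × (ZMod q). In other words, the Quantum Entropy Production Rate of the circulant quantum Markov semigroup vanishes exactly when the distribution α is symmetric under inversion. -/
import Mathlib


noncomputable section

lemma aux18 {a b : ℝ} (ha : 0 < a) (hb : 0 < b) :
    (a - b) * Real.log (a / b) = 0 ↔ a = b := by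
  rw [Real.log_div ha.ne' hb.ne']
  constructor
  · intro h
    by_contra hne
    rcases lt_or_gt_of_ne hne with hlt | hgt
    · have h1 : a - b < 0 := by linarith
      have h2 : Real.log a < Real.log b := Real.log_lt_log ha hlt
      nlinarith
    · have h1 : 0 < a - b := by linarith
      have h2 : Real.log b < Real.log a := Real.log_lt_log hb hgt
      nlinarith
  · intro h; rw [h]; ring

lemma aux18' {a b : ℝ} (ha : 0 < a) (hb : 0 < b) :
    0 ≤ (a - b) * Real.log (a / b) := by
  rw [Real.log_div ha.ne' hb.ne']
  rcases le_total a b with h | h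
  · have := Real.log_le_log ha h
    nlinarith
  · have := Real.log_le_log hb h
    nlinarith

/-- The Quantum Entropy Production Rate of a circulant quantum Markov semigroup
vanishes exactly when the distribution `α` is symmetric under inversion. -/
theorem stmt18 (p q : ℕ) [NeZero p] [NeZero q]
    (α : ZMod p × ZMod q → ℝ) (h0 : α (0, 0) = 0)
    (hpos : ∀ mn : ZMod p × ZMod q, mn ≠ (0, 0) → 0 < α mn) :
    (∑ mn ∈ Finset.univ.erase ((0 : ZMod p), (0 : ZMod q)),
        (α mn - α (-mn)) * Real.log (α mn / α (-mn)) = 0) ↔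
      ∀ mn : ZMod p × ZMod q, α mn = α (-mn) := by
  have hne : ∀ mn : ZMod p × ZMod q, mn ≠ (0, 0) → -mn ≠ (0, 0) := by
    intro mn h hc
    apply h
    have : mn = -(0, 0) := by rw [← hc]; simp
    simpa using this
  rw [Finset.sum_eq_zero_iff_of_nonneg]
  · constructor
    · intro h mn
      by_cases hmn : mn = (0, 0)
      · subst hmn; simp
      · have := h mn (Finset.mem_erase.2 ⟨hmn, Finset.mem_univ _⟩)
        exact (aux18 (hpos mn hmn) (hpos _ (hne mn hmn))).1 this
    · intro h mn hmn
      have hmn' : mn ≠ (0, 0) := (Finset.mem_erase.1 hmn).1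
      exact (aux18 (hpos mn hmn') (hpos _ (hne mn hmn'))).2 (h mn)
  · intro mn hmn
    have hmn' : mn ≠ (0, 0) := (Finset.mem_erase.1 hmn).1
    exact aux18' (hpos mn hmn') (hpos _ (hne mn hmn'))
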